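/- arXiv:1105.1683 — 3 statements merged into one kernel-verified Lean document; each statement's English description precedes it below -/
import Mathlib

section
/- Let G = (V,E) be a finite simple graph and let p ∈ [0,1]^V lie in the interior Shearer set of G, i.e. Ξ_{G[W]}(p) > 0 for every W ⊆ V. Let Y be distributed according to Shearer's measure μ_{G,p}. Then for every W ⊆ V, every v ∈ V ∖ W and every s ∈ {0,1}^W with μ_{G,p}(Y_W = s) > 0 one has μ_{G,p}(Y_v = 1 ∣ Y_W = s) ≥ Ξ_{G[W∪{v}]}(p) / Ξ_{G[W]}(p) > 0. -/
open MeasureTheory Finset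
open scoped Classical

/-- The critical function Ξ_{G[W]}(p). -/
noncomputable def Xi {V : Type*} (G : SimpleGraph V) (W : Finset V) (p : V → ℝ) : ℝ :=
  ∑ T ∈ W.powerset,
    if ∀ u ∈ T, ∀ w ∈ T, ¬ G.Adj u w then ∏ v ∈ T, -(1 - p v) else 0

/-- Cylinder event. -/
def cylEvt {V : Type*} (S : Finset V) (s : V → Bool) : Set (V → Bool) :=
  {ω | ∀ v ∈ S, ω v = s v}

def WeakDep {V : Type*} (G : SimpleGraph V) (p : V → ℝ)
    (μ : Measure (V → Bool)) : Prop :=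
  IsProbabilityMeasure μ ∧
  ∀ (v : V) (S : Finset V), (∀ w ∈ S, w ≠ v ∧ ¬ G.Adj v w) →
    ∀ s : V → Bool, 0 < (μ (cylEvt S s)).toReal →
      p v ≤ (μ ({ω | ω v = true} ∩ cylEvt S s)).toReal / (μ (cylEvt S s)).toReal

def StrongDep {V : Type*} (G : SimpleGraph V) (p : V → ℝ)
    (μ : Measure (V → Bool)) : Prop :=
  IsProbabilityMeasure μ ∧
  (∀ v : V, (μ {ω | ω v = true}).toReal = p v) ∧
  ∀ (S₁ S₂ : Finset V), (∀ u ∈ S₁, ∀ w ∈ S₂, u ≠ w ∧ ¬ G.Adj u w) →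
    ∀ s₁ s₂ : V → Bool,
      μ (cylEvt S₁ s₁ ∩ cylEvt S₂ s₂) = μ (cylEvt S₁ s₁) * μ (cylEvt S₂ s₂)

/-- Expectation of f under product field π_c restricted to W. -/
noncomputable def prodExp {V : Type*} (c : V → ℝ) (W : Finset V)
    (f : (W → Bool) → ℝ) : ℝ :=
  ∑ s : W → Bool, (∏ v : W, if s v then c v.1 else 1 - c v.1) * f s

/-- μ stochastically dominates the Bernoulli product field π_c. -/
def DomProd {V : Type*} (μ : Measure (V → Bool)) (c : V → ℝ) : Prop :=
  ∀ (W : Finset V) (f : (W → Bool) → ℝ), Monotone f →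
    prodExp c W f ≤ ∫ ω, f (fun v => ω v.1) ∂μ

/-- ν is the Bernoulli product field π_c. -/
def IsProduct {V : Type*} (c : V → ℝ) (μ : Measure (V → Bool)) : Prop :=
  IsProbabilityMeasure μ ∧
  ∀ (S : Finset V) (s : V → Bool),
    μ (cylEvt S s) = ∏ v ∈ S, ENNReal.ofReal (if s v then c v else 1 - c v)

/-- μ is Shearer's measure μ_{G,p}. -/
def IsShearer {V : Type*} [Fintype V] (G : SimpleGraph V) (p : V → ℝ)
    (μ : Measure (V → Bool)) : Prop :=
  IsProbabilityMeasure μ ∧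
  ∀ W : Finset V,
    (μ {ω | ∀ v, (ω v = false ↔ v ∈ W)}).toReal =
      ∑ T ∈ (Finset.univ : Finset V).powerset,
        if W ⊆ T ∧ ∀ u ∈ T, ∀ w ∈ T, ¬ G.Adj u w
        then (-1 : ℝ) ^ (T.card - W.card) * ∏ v ∈ T, (1 - p v) else 0

abbrev Ind {V : Type*} (G : SimpleGraph V) (T : Finset V) : Prop :=
  ∀ u ∈ T, ∀ w ∈ T, ¬ G.Adj u w

lemma Xi_def {V : Type*} (G : SimpleGraph V) (W : Finset V) (p : V → ℝ) :
    Xi G W p = ∑ T ∈ W.powerset, if Ind G T then ∏ v ∈ T, -(1 - p v) else 0 := rfl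

lemma ind_subset {V : Type*} {G : SimpleGraph V} {T T' : Finset V} (h : T' ⊆ T)
    (hT : Ind G T) : Ind G T' := fun u hu w hw => hT u (h hu) w (h hw)

lemma ind_insert {V : Type*} [DecidableEq V] {G : SimpleGraph V} {T : Finset V} {v : V} :
    Ind G (insert v T) ↔ (∀ u ∈ T, ¬ G.Adj v u) ∧ Ind G T := by
  constructor
  · intro h
    exact ⟨fun u hu => h v (mem_insert_self _ _) u (mem_insert_of_mem hu),
      ind_subset (subset_insert _ _) h⟩
  · rintro ⟨h1, h2⟩ u hu w hw hadj
    rcases Finset.mem_insert.mp hu with he | hu <;> rcases Finset.mem_insert.mp hw with he' | hw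
    · exact G.irrefl (he ▸ he' ▸ hadj)
    · exact h1 w hw (he ▸ hadj)
    · exact h1 u hu (G.adj_symm (he' ▸ hadj))
    · exact h2 u hu w hw hadj

lemma xi_insert {V : Type*} [DecidableEq V] (G : SimpleGraph V) (p : V → ℝ)
    {U : Finset V} {v : V} (hv : v ∉ U) :
    Xi G (insert v U) p
      = Xi G U p - (1 - p v) * Xi G (U.filter fun u => ¬ G.Adj v u) p := by
  rw [Xi_def, Finset.sum_powerset_insert hv, Xi_def]
  have key : ∀ T ∈ U.powerset,
      (if Ind G (insert v T) then ∏ x ∈ insert v T, -(1 - p x) else 0)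
      = -(1 - p v) * (if (T ⊆ U.filter fun u => ¬ G.Adj v u) ∧ Ind G T
          then ∏ x ∈ T, -(1 - p x) else 0) := by
    intro T hT
    rw [Finset.mem_powerset] at hT
    have hvT : v ∉ T := fun h => hv (hT h)
    have hiff : Ind G (insert v T) ↔ ((T ⊆ U.filter fun u => ¬ G.Adj v u) ∧ Ind G T) := by
      rw [ind_insert]
      constructor
      · rintro ⟨h1, h2⟩
        exact ⟨fun x hx => Finset.mem_filter.mpr ⟨hT hx, h1 x hx⟩, h2⟩
      · rintro ⟨h1, h2⟩
        exact ⟨fun x hx => (Finset.mem_filter.mp (h1 hx)).2, h2⟩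
    by_cases hc : (T ⊆ U.filter fun u => ¬ G.Adj v u) ∧ Ind G T
    · rw [if_pos (hiff.mpr hc), if_pos hc, Finset.prod_insert hvT]
    · rw [if_neg (fun h => hc (hiff.mp h)), if_neg hc, mul_zero]
  rw [Finset.sum_congr rfl key, ← Finset.mul_sum]
  have hsub : (∑ T ∈ U.powerset,
      if (T ⊆ U.filter fun u => ¬ G.Adj v u) ∧ Ind G T then ∏ x ∈ T, -(1 - p x) else 0)
      = Xi G (U.filter fun u => ¬ G.Adj v u) p := by
    rw [Xi_def]
    rw [← Finset.sum_subset (Finset.powerset_mono.mpr (Finset.filter_subset (fun u => ¬ G.Adj v u) U))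
      (fun T hT hT' => ?_)]
    · exact Finset.sum_congr rfl fun T hT => by
        rw [Finset.mem_powerset] at hT
        by_cases h : Ind G T
        · rw [if_pos ⟨hT, h⟩, if_pos h]
        · rw [if_neg (fun hc => h hc.2), if_neg h]
    · rw [if_neg]
      rintro ⟨h1, -⟩
      exact hT' (Finset.mem_powerset.mpr h1)
  rw [hsub]; ring

lemma xi_insert_le {V : Type*} [Fintype V] [DecidableEq V] (G : SimpleGraph V) (p : V → ℝ)
    (hp : ∀ v, p v ∈ Set.Icc (0:ℝ) 1) (hint : ∀ W : Finset V, 0 < Xi G W p)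
    {U : Finset V} {v : V} (hv : v ∉ U) :
    Xi G (insert v U) p ≤ Xi G U p := by
  rw [xi_insert G p hv]
  have h1 : (0:ℝ) ≤ 1 - p v := by linarith [(hp v).2]
  nlinarith [hint (U.filter fun u => ¬ G.Adj v u)]

lemma xi_ratio {V : Type*} [Fintype V] [DecidableEq V] (G : SimpleGraph V) (p : V → ℝ)
    (hp : ∀ v, p v ∈ Set.Icc (0:ℝ) 1) (hint : ∀ W : Finset V, 0 < Xi G W p) :
    ∀ (n : ℕ) (U : Finset V), U.card = n → ∀ U₀ ⊆ U, ∀ v, v ∉ U →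
      Xi G (insert v U) p * Xi G U₀ p ≤ Xi G (insert v U₀) p * Xi G U p := by
  intro n
  induction n using Nat.strong_induction_on with
  | _ n IH =>
    intro U hUn U₀ hU₀ v hv
    by_cases hEq : U₀ = U
    · subst hEq; exact le_refl _
    · obtain ⟨w, hwU, hwU₀⟩ : ∃ w, w ∈ U ∧ w ∉ U₀ := by
        by_contra hcon
        push_neg at hcon
        exact hEq (Finset.Subset.antisymm hU₀ (fun x hx => hcon x hx))
      set U' := U.erase w with hU'
      have hUw : U = insert w U' := (Finset.insert_erase hwU).symm
      have hcard' : U'.card < n := hUn ▸ Finset.card_erase_lt_of_mem hwU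
      have hU₀' : U₀ ⊆ U' := fun x hx =>
        Finset.mem_erase.mpr ⟨fun h => hwU₀ (h ▸ hx), hU₀ hx⟩
      have hvU' : v ∉ U' := fun h => hv (Finset.erase_subset _ _ h)
      have hwv : w ≠ v := fun h => hv (h ▸ hwU)
      have hw' : w ∉ U' := Finset.notMem_erase _ _
      have hq : (0:ℝ) ≤ 1 - p w := by linarith [(hp w).2]
      set Uf := U'.filter (fun u => ¬ G.Adj w u) with hUf
      have hUfsub : Uf ⊆ U' := Finset.filter_subset _ _
      have step1 : Xi G (insert v U) p * Xi G U' p ≤ Xi G (insert v U') p * Xi G U p := by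
        have hXiU : Xi G U p = Xi G U' p - (1 - p w) * Xi G Uf p := by
          rw [hUw]; exact xi_insert G p hw'
        have hwvU' : w ∉ insert v U' := by
          simp only [Finset.mem_insert]
          rintro (h | h); exact hwv h; exact hw' h
        have hIV : insert v U = insert w (insert v U') := by
          rw [hUw, Finset.insert_comm]
        have hXiUv : Xi G (insert v U) p = Xi G (insert v U') p
            - (1 - p w) * Xi G ((insert v U').filter fun u => ¬ G.Adj w u) p := by
          rw [hIV]; exact xi_insert G p hwvU'
        by_cases hadj : G.Adj w v
        · have hfil : (insert v U').filter (fun u => ¬ G.Adj w u) = Uf := by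
            rw [Finset.filter_insert, if_neg (not_not_intro hadj)]
          rw [hXiUv, hfil, hXiU]
          have hmono : Xi G (insert v U') p ≤ Xi G U' p := xi_insert_le G p hp hint hvU'
          nlinarith [hint Uf, hint U', hint (insert v U'),
            mul_le_mul_of_nonneg_left hmono (mul_nonneg hq (hint Uf).le)]
        · have hfil : (insert v U').filter (fun u => ¬ G.Adj w u) = insert v Uf := by
            rw [Finset.filter_insert, if_pos hadj]
          have hvUf : v ∉ Uf := fun h => hvU' (hUfsub h)
          have hIH : Xi G (insert v U') p * Xi G Uf p ≤ Xi G (insert v Uf) p * Xi G U' p :=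
            IH U'.card hcard' U' rfl Uf hUfsub v hvU'
          rw [hXiUv, hfil, hXiU]
          nlinarith [hint Uf, hint U', hint (insert v U'), hint (insert v Uf),
            mul_le_mul_of_nonneg_left hIH hq]
      have step2 : Xi G (insert v U') p * Xi G U₀ p ≤ Xi G (insert v U₀) p * Xi G U' p :=
        IH U'.card hcard' U' rfl U₀ hU₀' v hvU'
      have hD1 := hint U
      have hD2 := hint U'
      have hD3 := hint U₀
      have h3 : Xi G (insert v U) p * Xi G U₀ p * Xi G U' p
          ≤ Xi G (insert v U₀) p * Xi G U p * Xi G U' p := by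
        nlinarith [mul_le_mul_of_nonneg_right step1 hD3.le,
          mul_le_mul_of_nonneg_right step2 hD1.le]
      exact le_of_mul_le_mul_right h3 hD2

lemma bool_aux (a b : Bool) : a = b ↔ (a = false ↔ b = false) := by
  cases a <;> cases b <;> simp

lemma prod_neg_aux {α : Type*} (s : Finset α) (f : α → ℝ) :
    ∏ i ∈ s, -f i = (-1)^s.card * ∏ i ∈ s, f i := by
  rw [← Finset.prod_const, ← Finset.prod_mul_distrib]; simp

lemma cyl_univ {V : Type*} [Fintype V] [DecidableEq V] (G : SimpleGraph V) (p : V → ℝ)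
    (μ : Measure (V → Bool)) (hμ : IsShearer G p μ) (s : V → Bool) :
    (μ (cylEvt Finset.univ s)).toReal =
      if Ind G (Finset.univ.filter fun u => s u = false) then
        (∏ a ∈ Finset.univ.filter (fun u => s u = false), (1 - p a)) *
          Xi G ((Finset.univ.filter fun u => s u = true).filter
            (fun b => ∀ a ∈ Finset.univ.filter (fun u => s u = false), ¬ G.Adj a b)) p
      else 0 := by
  set A := Finset.univ.filter (fun u : V => s u = false) with hA
  set Bs := Finset.univ.filter (fun u : V => s u = true) with hBsdef
  set B' := Bs.filter (fun b => ∀ a ∈ A, ¬ G.Adj a b) with hB'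
  have hBs : Bs = Finset.univ \ A := by
    ext x
    simp only [hBsdef, hA, Finset.mem_filter, Finset.mem_univ, true_and, Finset.mem_sdiff]
    cases s x <;> simp
  -- identify the cylinder with the atom
  have h1 : cylEvt Finset.univ s = {ω : V → Bool | ∀ v, (ω v = false ↔ v ∈ A)} := by
    ext ω
    simp only [cylEvt, Set.mem_setOf_eq, Finset.mem_univ, forall_true_left, hA,
      Finset.mem_filter, true_and]
    exact forall_congr' fun v => bool_aux (ω v) (s v)
  rw [h1]
  -- the big sum
  set f : Finset V → ℝ := fun T =>
    if A ⊆ T ∧ ∀ u ∈ T, ∀ w ∈ T, ¬ G.Adj u w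
    then (-1 : ℝ) ^ (T.card - A.card) * ∏ v ∈ T, (1 - p v) else 0 with hf
  have S0 : (μ {ω : V → Bool | ∀ v, (ω v = false ↔ v ∈ A)}).toReal
      = ∑ T ∈ (Finset.univ : Finset V).powerset, f T := by
    rw [hμ.2 A]
    refine Finset.sum_congr rfl fun T _ => ?_
    simp only [hf]
    by_cases h : A ⊆ T ∧ ∀ u ∈ T, ∀ w ∈ T, ¬ G.Adj u w
    · rw [if_pos h, if_pos h]
    · rw [if_neg h, if_neg h]
  have S1 : ∑ T ∈ (Finset.univ : Finset V).powerset, f T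
      = ∑ T ∈ (Finset.univ : Finset V).powerset.filter (fun T => A ⊆ T), f T := by
    refine (Finset.sum_subset (Finset.filter_subset _ _) ?_).symm
    intro T hT hT'
    simp only [Finset.mem_filter] at hT'
    simp only [hf]
    rw [if_neg]
    rintro ⟨h, -⟩
    exact hT' ⟨hT, h⟩
  have S2 : ∑ T ∈ (Finset.univ : Finset V).powerset.filter (fun T => A ⊆ T), f T
      = ∑ S' ∈ Bs.powerset, f (A ∪ S') := by
    refine Finset.sum_nbij' (fun T => T \ A) (fun S' => A ∪ S') ?_ ?_ ?_ ?_ ?_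
    · intro T hT
      simp only [Finset.mem_filter, Finset.mem_powerset] at hT
      rw [Finset.mem_powerset, hBs]
      exact Finset.sdiff_subset_sdiff hT.1 (Finset.Subset.refl _)
    · intro S' hS'
      simp only [Finset.mem_filter, Finset.mem_powerset]
      exact ⟨Finset.subset_univ _, Finset.subset_union_left⟩
    · intro T hT
      simp only [Finset.mem_filter] at hT
      exact Finset.union_sdiff_of_subset hT.2
    · intro S' hS'
      rw [Finset.mem_powerset, hBs] at hS'
      refine Finset.union_sdiff_cancel_left ?_
      exact Finset.disjoint_left.mpr fun x hxA hxS' => (Finset.mem_sdiff.mp (hS' hxS')).2 hxA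
    · intro T hT
      simp only [Finset.mem_filter] at hT
      rw [Finset.union_sdiff_of_subset hT.2]
  have hdisj : ∀ S' ∈ Bs.powerset, Disjoint A S' := by
    intro S' hS'
    rw [Finset.mem_powerset, hBs] at hS'
    exact Finset.disjoint_left.mpr fun x hxA hxS' => (Finset.mem_sdiff.mp (hS' hxS')).2 hxA
  have S3 : ∀ S' ∈ Bs.powerset, f (A ∪ S')
      = (∏ a ∈ A, (1 - p a)) *
        (if Ind G (A ∪ S') then ∏ v ∈ S', -(1 - p v) else 0) := by
    intro S' hS'
    have hd := hdisj S' hS'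
    simp only [hf]
    by_cases hI : Ind G (A ∪ S')
    · have hc : A ⊆ A ∪ S' ∧ ∀ u ∈ A ∪ S', ∀ w ∈ A ∪ S', ¬ G.Adj u w :=
        ⟨Finset.subset_union_left, hI⟩
      rw [if_pos hc, if_pos hI,
        Finset.card_union_of_disjoint hd, Nat.add_sub_cancel_left,
        Finset.prod_union hd, prod_neg_aux]
      ring
    · rw [if_neg, if_neg hI, mul_zero]
      rintro ⟨-, h⟩
      exact hI h
  rw [S0, S1, S2, Finset.sum_congr rfl S3, ← Finset.mul_sum]
  by_cases hIA : Ind G A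
  · rw [if_pos hIA]
    congr 1
    have S5 : ∑ S' ∈ Bs.powerset, (if Ind G (A ∪ S') then ∏ v ∈ S', -(1 - p v) else 0)
        = ∑ S' ∈ B'.powerset, (if Ind G (A ∪ S') then ∏ v ∈ S', -(1 - p v) else 0) := by
      refine (Finset.sum_subset (Finset.powerset_mono.mpr (Finset.filter_subset _ _)) ?_).symm
      intro S' hS' hS''
      rw [Finset.mem_powerset] at hS'
      rw [if_neg]
      intro hI
      apply hS''
      rw [Finset.mem_powerset]
      intro x hx
      rw [Finset.mem_filter]
      exact ⟨hS' hx, fun a ha => hI a (Finset.mem_union_left _ ha) x (Finset.mem_union_right _ hx)⟩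
    rw [S5, Xi_def]
    refine Finset.sum_congr rfl fun S' hS' => ?_
    rw [Finset.mem_powerset] at hS'
    have hiff : Ind G (A ∪ S') ↔ Ind G S' := by
      constructor
      · exact ind_subset Finset.subset_union_right
      · intro hIS u hu w hw hadj
        rcases Finset.mem_union.mp hu with hu | hu <;> rcases Finset.mem_union.mp hw with hw | hw
        · exact hIA u hu w hw hadj
        · exact (Finset.mem_filter.mp (hS' hw)).2 u hu hadj
        · exact (Finset.mem_filter.mp (hS' hu)).2 w hw (G.adj_symm hadj)
        · exact hIS u hu w hw hadj
    by_cases h : Ind G S'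
    · rw [if_pos (hiff.mpr h), if_pos h]
    · rw [if_neg (fun hc => h (hiff.mp hc)), if_neg h]
  · rw [if_neg hIA]
    have : ∀ S' ∈ Bs.powerset, (if Ind G (A ∪ S') then ∏ v ∈ S', -(1 - p v) else 0) = 0 := by
      intro S' _
      rw [if_neg]
      intro hI
      exact hIA (ind_subset Finset.subset_union_left hI)
    rw [Finset.sum_congr rfl this, Finset.sum_const_zero, mul_zero]

lemma meas_all {V : Type*} [Fintype V] (s : Set (V → Bool)) : MeasurableSet s :=
  s.toFinite.measurableSet

lemma cyl_mem_iff {V : Type*} [DecidableEq V] {S : Finset V} {s : V → Bool} {u : V}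
    (hu : u ∉ S) (ω : V → Bool) (b : Bool) :
    ω ∈ cylEvt (insert u S) (Function.update s u b) ↔ (ω u = b ∧ ω ∈ cylEvt S s) := by
  simp only [cylEvt, Set.mem_setOf_eq, Finset.forall_mem_insert, Function.update_self]
  refine and_congr Iff.rfl (forall_congr' fun v => ?_)
  constructor
  · intro h hv
    have hne : v ≠ u := fun he => hu (he ▸ hv)
    rw [← Function.update_of_ne hne b s]; exact h hv
  · intro h hv
    have hne : v ≠ u := fun he => hu (he ▸ hv)
    rw [Function.update_of_ne hne b s]; exact h hv

lemma cyl_split_measure {V : Type*} [Fintype V] [DecidableEq V]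
    (μ : Measure (V → Bool)) [IsFiniteMeasure μ]
    {S : Finset V} {s : V → Bool} {u : V} (hu : u ∉ S) :
    (μ (cylEvt S s)).toReal =
      (μ (cylEvt (insert u S) (Function.update s u true))).toReal +
      (μ (cylEvt (insert u S) (Function.update s u false))).toReal := by
  have hsplit : cylEvt S s = cylEvt (insert u S) (Function.update s u true)
      ∪ cylEvt (insert u S) (Function.update s u false) := by
    ext ω
    rw [Set.mem_union, cyl_mem_iff hu, cyl_mem_iff hu]
    cases hω : ω u <;> simp [hω]
  have hdisj : Disjoint (cylEvt (insert u S) (Function.update s u true))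
      (cylEvt (insert u S) (Function.update s u false)) := by
    rw [Set.disjoint_left]
    intro ω h1 h2
    rw [cyl_mem_iff hu] at h1 h2
    rw [h1.1] at h2
    exact Bool.noConfusion h2.1
  rw [hsplit, measure_union hdisj (meas_all _),
    ENNReal.toReal_add (measure_ne_top μ _) (measure_ne_top μ _)]

lemma filter_update_cong {V : Type*} [DecidableEq V] (S : Finset V) (s : V → Bool) {u : V}
    (hu : u ∉ S) (b c : Bool) :
    S.filter (fun w => Function.update s u b w = c) = S.filter (fun w => s w = c) := by
  refine Finset.filter_congr fun x hx => ?_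
  have hne : x ≠ u := fun he => hu (he ▸ hx)
  rw [Function.update_of_ne hne b s]

lemma filter_update_same {V : Type*} [DecidableEq V] (S : Finset V) (s : V → Bool) {u : V}
    (hu : u ∉ S) (b : Bool) :
    (insert u S).filter (fun w => Function.update s u b w = b) =
      insert u (S.filter (fun w => s w = b)) := by
  rw [Finset.filter_insert, Function.update_self, if_pos rfl, filter_update_cong S s hu b b]

lemma filter_update_ne {V : Type*} [DecidableEq V] (S : Finset V) (s : V → Bool) {u : V}
    (hu : u ∉ S) {b c : Bool} (hbc : b ≠ c) :
    (insert u S).filter (fun w => Function.update s u b w = c) =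
      S.filter (fun w => s w = c) := by
  rw [Finset.filter_insert, Function.update_self, if_neg hbc, filter_update_cong S s hu b c]

lemma cyl_measure {V : Type*} [Fintype V] [DecidableEq V] (G : SimpleGraph V) (p : V → ℝ)
    (μ : Measure (V → Bool)) (hμ : IsShearer G p μ) :
    ∀ (n : ℕ) (S : Finset V) (s : V → Bool), (Finset.univ \ S).card ≤ n →
    (μ (cylEvt S s)).toReal =
      if Ind G (S.filter fun u => s u = false) then
        (∏ a ∈ S.filter (fun u => s u = false), (1 - p a)) *
          Xi G ((S.filter fun u => s u = true).filter
            (fun b => ∀ a ∈ S.filter (fun u => s u = false), ¬ G.Adj a b)) p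
      else 0 := by
  haveI := hμ.1
  intro n
  induction n with
  | zero =>
    intro S s hcard
    have hS : S = Finset.univ := by
      have h0 : Finset.univ \ S = ∅ := Finset.card_eq_zero.mp (Nat.le_zero.mp hcard)
      exact Finset.Subset.antisymm (Finset.subset_univ _)
        (Finset.sdiff_eq_empty_iff_subset.mp h0)
    subst hS
    exact cyl_univ G p μ hμ s
  | succ n IH =>
    intro S s hcard
    by_cases hS : S = Finset.univ
    · subst hS
      exact cyl_univ G p μ hμ s
    · obtain ⟨u, hu⟩ : ∃ u, u ∉ S := by
        by_contra h
        push_neg at h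
        exact hS (Finset.eq_univ_of_forall h)
      have hcard' : (Finset.univ \ insert u S).card ≤ n := by
        have he : Finset.univ \ insert u S = (Finset.univ \ S).erase u := by
          ext x
          simp only [Finset.mem_sdiff, Finset.mem_insert, Finset.mem_erase, Finset.mem_univ,
            true_and]
          tauto
        have hmem : u ∈ Finset.univ \ S := Finset.mem_sdiff.mpr ⟨Finset.mem_univ u, hu⟩
        rw [he, Finset.card_erase_of_mem hmem]
        omega
      set A := S.filter (fun w => s w = false) with hA
      set Bs := S.filter (fun w => s w = true) with hBsdef
      set B' := Bs.filter (fun b => ∀ a ∈ A, ¬ G.Adj a b) with hB'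
      have huA : u ∉ A := fun h => hu (Finset.filter_subset _ _ h)
      have huBs : u ∉ Bs := fun h => hu (Finset.filter_subset _ _ h)
      have huB' : u ∉ B' := fun h => huBs (Finset.filter_subset _ _ h)
      have hT := IH (insert u S) (Function.update s u true) hcard'
      have hF := IH (insert u S) (Function.update s u false) hcard'
      rw [filter_update_ne S s hu (by simp : (true:Bool) ≠ false),
        filter_update_same S s hu true] at hT
      rw [filter_update_same S s hu false,
        filter_update_ne S s hu (by simp : (false:Bool) ≠ true)] at hF
      rw [cyl_split_measure μ hu, hT, hF]
      -- now pure algebra over Xi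
      by_cases hIA : Ind G A
      · by_cases hcmp : ∀ a ∈ A, ¬ G.Adj a u
        · have hcmp' : ∀ a ∈ A, ¬ G.Adj u a := fun a ha had => hcmp a ha (G.adj_symm had)
          have hIA' : Ind G (insert u A) := ind_insert.mpr ⟨hcmp', hIA⟩
          have hfB : (insert u Bs).filter (fun b => ∀ a ∈ A, ¬ G.Adj a b)
              = insert u B' := by
            rw [Finset.filter_insert, if_pos hcmp]
          have hfB2 : Bs.filter (fun b => ∀ a ∈ insert u A, ¬ G.Adj a b)
              = B'.filter (fun b => ¬ G.Adj u b) := by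
            ext x
            simp only [hB', Finset.mem_filter, Finset.forall_mem_insert]
            tauto
          rw [if_pos hIA, if_pos hIA', hfB, hfB2, Finset.prod_insert huA,
            xi_insert G p huB']
          rw [if_pos hIA]
          ring
        · have hIA' : ¬ Ind G (insert u A) := by
            intro h
            apply hcmp
            intro a ha hadj
            exact (ind_insert.mp h).1 a ha (G.adj_symm hadj)
          have hfB : (insert u Bs).filter (fun b => ∀ a ∈ A, ¬ G.Adj a b) = B' := by
            rw [Finset.filter_insert, if_neg hcmp]
          rw [if_pos hIA, if_neg hIA', hfB, if_pos hIA]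
          ring
      · have hIA' : ¬ Ind G (insert u A) := fun h => hIA (ind_subset (Finset.subset_insert _ _) h)
        rw [if_neg hIA, if_neg hIA', if_neg hIA]
        ring

/-- intrinsic conditional minorization for Shearer's measure. -/
theorem stmt17 {V : Type*} [Fintype V] [DecidableEq V] (G : SimpleGraph V)
    (p : V → ℝ) (hp : ∀ v, p v ∈ Set.Icc (0:ℝ) 1)
    (hint : ∀ W : Finset V, 0 < Xi G W p)
    (μ : Measure (V → Bool)) (hμ : IsShearer G p μ) :
    ∀ (W : Finset V) (v : V), v ∉ W → ∀ s : V → Bool,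
      0 < (μ (cylEvt W s)).toReal →
      Xi G (insert v W) p / Xi G W p ≤
        (μ ({ω | ω v = true} ∩ cylEvt W s)).toReal / (μ (cylEvt W s)).toReal ∧
      0 < Xi G (insert v W) p / Xi G W p := by
  intro W v hvW s hpos
  set A := W.filter (fun u => s u = false) with hA
  set Bs := W.filter (fun u => s u = true) with hBsdef
  set B' := Bs.filter (fun b => ∀ a ∈ A, ¬ G.Adj a b) with hB'
  have hB'W : B' ⊆ W :=
    fun x hx => Finset.filter_subset _ _ (Finset.filter_subset _ _ hx)
  have hD := cyl_measure G p μ hμ (Finset.univ \ W).card W s le_rfl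
  rw [hD] at hpos
  have hIA : Ind G A := by
    by_contra h
    rw [if_neg h] at hpos
    exact lt_irrefl 0 hpos
  rw [if_pos hIA] at hpos hD
  have hqA : 0 < ∏ a ∈ A, (1 - p a) := by
    have h0 : (0:ℝ) ≤ ∏ a ∈ A, (1 - p a) :=
      Finset.prod_nonneg fun a _ => by linarith [(hp a).2]
    rcases h0.lt_or_eq with h | h
    · exact h
    · exfalso
      rw [← h, zero_mul] at hpos
      exact lt_irrefl 0 hpos
  have hset : {ω : V → Bool | ω v = true} ∩ cylEvt W s
      = cylEvt (insert v W) (Function.update s v true) := by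
    ext ω
    rw [Set.mem_inter_iff, cyl_mem_iff hvW]
    exact Iff.rfl
  have hN := cyl_measure G p μ hμ (Finset.univ \ insert v W).card (insert v W)
    (Function.update s v true) le_rfl
  rw [filter_update_ne W s hvW (by simp : (true:Bool) ≠ false),
    filter_update_same W s hvW true, if_pos hIA] at hN
  refine ⟨?_, div_pos (hint _) (hint _)⟩
  rw [hset, hN, hD]
  by_cases hcmp : ∀ a ∈ A, ¬ G.Adj a v
  · have hfB : (insert v Bs).filter (fun b => ∀ a ∈ A, ¬ G.Adj a b) = insert v B' := by
      rw [Finset.filter_insert, if_pos hcmp]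
    rw [hfB, mul_div_mul_left _ _ (ne_of_gt hqA)]
    rw [div_le_div_iff₀ (hint W) (hint B')]
    exact xi_ratio G p hp hint W.card W rfl B' hB'W v hvW
  · have hfB : (insert v Bs).filter (fun b => ∀ a ∈ A, ¬ G.Adj a b) = B' := by
      rw [Finset.filter_insert, if_neg hcmp]
    rw [hfB, div_self (ne_of_gt (mul_pos hqA (hint B')))]
    rw [div_le_one (hint W)]
    exact xi_insert_le G p hp hint hvW
end

section
/- Let G = (V,E) be a finite simple graph, let p ∈ [0,1]^V lie in the Shearer set of G, and let c ∈ [0,1]^V. Define r ∈ [0,1]^V by r_v := p_v + c_v − c_v p_v (equivalently 1 − r_v = (1 − p_v)(1 − c_v)). Then r lies in the Shearer set of G, and if Y is distributed according to Shearer's measure μ_{G,p} and X is distributed according to the Bernoulli product field π_c independently of Y, then the coordinatewise maximum Y ∨ X is distributed according to Shearer's measure μ_{G,r}. In particular μ_{G,p} is stochastically dominated by μ_{G,r}. -/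
open MeasureTheory Finset
open scoped Classical

/-- The law of the coordinatewise maximum of two independent BRFs with laws μ, ν. -/
noncomputable def maxLaw {V : Type*} (μ ν : Measure (V → Bool)) : Measure (V → Bool) :=
  Measure.map (fun ω : (V → Bool) × (V → Bool) => fun v => ω.1 v || ω.2 v) (μ.prod ν)

section Helpers
variable {V : Type*} [Fintype V]

omit [Fintype V] in
lemma neg_one_pow_sub' {a b : ℕ} (h : b ≤ a) : (-1:ℝ)^(a-b) = (-1)^a * (-1)^b := by
  have h2 : (-1:ℝ)^(a-b) * (-1)^b = (-1)^a := by
    rw [← pow_add, Nat.sub_add_cancel h]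
  have hb : ((-1:ℝ)^b) * ((-1:ℝ)^b) = 1 := by
    rw [← pow_add, ← two_mul, pow_mul]; norm_num
  calc (-1:ℝ)^(a-b) = (-1:ℝ)^(a-b) * (((-1:ℝ)^b) * ((-1:ℝ)^b)) := by rw [hb, mul_one]
    _ = ((-1:ℝ)^(a-b) * (-1)^b) * (-1)^b := by ring
    _ = (-1)^a * (-1)^b := by rw [h2]

omit [Fintype V] in
lemma sum_neg_one_pow' (D : Finset V) :
    ∑ C ∈ D.powerset, (-1:ℝ)^C.card = if D = ∅ then 1 else 0 := by
  have h := Finset.sum_powerset_neg_one_pow_card (x := D)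
  have h2 : ((∑ m ∈ D.powerset, (-1 : ℤ) ^ m.card : ℤ) : ℝ)
      = ((if D = ∅ then 1 else 0 : ℤ) : ℝ) := by rw [h]
  push_cast at h2
  simpa using h2

lemma inner_ie (W U T : Finset V) (hWU : Disjoint W U) :
    ∑ A ∈ (univ : Finset V).powerset, (if W ⊆ A ∧ Disjoint A U ∧ A ⊆ T then (-1:ℝ)^(T.card - A.card) else 0)
    = if W ⊆ T ∧ T ⊆ W ∪ U then (-1:ℝ)^(T.card - W.card) else 0 := by
  rw [← Finset.sum_filter]
  by_cases hWT : W ⊆ T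
  · -- reindex A = C ∪ W, C ⊆ (T \ U) \ W
    have hbij : ∑ A ∈ (univ : Finset V).powerset.filter
        (fun A => W ⊆ A ∧ Disjoint A U ∧ A ⊆ T), (-1:ℝ)^(T.card - A.card)
        = ∑ C ∈ ((T \ U) \ W).powerset, (-1:ℝ)^(T.card - (C ∪ W).card) := by
      apply Finset.sum_nbij' (fun A => A \ W) (fun C => C ∪ W)
      · intro A hA
        simp only [mem_filter, mem_powerset] at hA
        obtain ⟨-, hWA, hAU, hAT⟩ := hA
        simp only [mem_powerset]
        intro x hx
        simp only [mem_sdiff] at hx ⊢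
        exact ⟨⟨hAT hx.1, fun hxU => (Finset.disjoint_left.mp hAU hx.1) hxU⟩, hx.2⟩
      · intro C hC
        simp only [mem_powerset] at hC
        simp only [mem_filter, mem_powerset]
        refine ⟨subset_univ _, subset_union_right, ?_, ?_⟩
        · rw [Finset.disjoint_union_left]
          constructor
          · exact Finset.disjoint_left.mpr (fun x hx => by
              have := hC hx; simp only [mem_sdiff] at this; exact this.1.2)
          · exact hWU
        · apply Finset.union_subset
          · intro x hx; have := hC hx; simp only [mem_sdiff] at this; exact this.1.1
          · exact hWT
      · intro A hA
        simp only [mem_filter, mem_powerset] at hA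
        exact Finset.sdiff_union_of_subset hA.2.1
      · intro C hC
        simp only [mem_powerset] at hC
        apply Finset.union_sdiff_cancel_right
        exact Finset.disjoint_left.mpr (fun x hx => by
          have := hC hx; simp only [mem_sdiff] at this; exact this.2)
      · intro A hA
        simp only [mem_filter, mem_powerset] at hA
        rw [Finset.sdiff_union_of_subset hA.2.1]
    rw [hbij]
    have hcalc : ∀ C ∈ ((T \ U) \ W).powerset,
        (-1:ℝ)^(T.card - (C ∪ W).card) = (-1:ℝ)^(T.card - W.card) * (-1:ℝ)^C.card := by
      intro C hC
      simp only [mem_powerset] at hC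
      have hCW : Disjoint C W := Finset.disjoint_left.mpr (fun x hx => by
        have := hC hx; simp only [mem_sdiff] at this; exact this.2)
      have hCT : C ∪ W ⊆ T := Finset.union_subset
        (fun x hx => by have := hC hx; simp only [mem_sdiff] at this; exact this.1.1) hWT
      have hcard : (C ∪ W).card = C.card + W.card := Finset.card_union_of_disjoint hCW
      rw [neg_one_pow_sub' (Finset.card_le_card hCT), neg_one_pow_sub' (Finset.card_le_card hWT),
          hcard, pow_add]
      ring
    rw [Finset.sum_congr rfl hcalc, ← Finset.mul_sum, sum_neg_one_pow']
    have hempty : ((T \ U) \ W) = ∅ ↔ T ⊆ W ∪ U := by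
      constructor
      · intro h x hx
        by_contra hx2
        simp only [mem_union, not_or] at hx2
        have : x ∈ (T \ U) \ W := by simp [mem_sdiff, hx, hx2.1, hx2.2]
        rw [h] at this; exact absurd this (Finset.notMem_empty x)
      · intro h
        rw [Finset.eq_empty_iff_forall_notMem]
        intro x hx
        simp only [mem_sdiff] at hx
        rcases mem_union.mp (h hx.1.1) with h1 | h1
        · exact hx.2 h1
        · exact hx.1.2 h1
    by_cases hT : T ⊆ W ∪ U
    · rw [if_pos (hempty.mpr hT), if_pos ⟨hWT, hT⟩, mul_one]
    · rw [if_neg (fun h => hT (hempty.mp h)), if_neg (fun h => hT h.2), mul_zero]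
  · rw [if_neg (fun h => hWT h.1)]
    apply Finset.sum_eq_zero
    intro A hA
    simp only [mem_filter] at hA
    exact absurd (hA.2.1.trans hA.2.2.2) hWT

lemma L1 (Q : Finset V → Prop) (w : V → ℝ) (W U : Finset V) (hWU : Disjoint W U) :
    ∑ A ∈ (univ : Finset V).powerset, (if W ⊆ A ∧ Disjoint A U then
        ∑ T ∈ (univ : Finset V).powerset,
          (if A ⊆ T ∧ Q T then (-1:ℝ)^(T.card - A.card) * ∏ v ∈ T, w v else 0) else 0)
    = ∑ T ∈ (univ : Finset V).powerset,
        (if W ⊆ T ∧ T ⊆ W ∪ U ∧ Q T then (-1:ℝ)^(T.card - W.card) * ∏ v ∈ T, w v else 0) := by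
  have step1 : ∑ A ∈ (univ : Finset V).powerset, (if W ⊆ A ∧ Disjoint A U then
        ∑ T ∈ (univ : Finset V).powerset,
          (if A ⊆ T ∧ Q T then (-1:ℝ)^(T.card - A.card) * ∏ v ∈ T, w v else 0) else 0)
      = ∑ A ∈ (univ : Finset V).powerset, ∑ T ∈ (univ : Finset V).powerset,
          (if Q T then (if W ⊆ A ∧ Disjoint A U ∧ A ⊆ T then (-1:ℝ)^(T.card - A.card) else 0)
            * ∏ v ∈ T, w v else 0) := by
    apply Finset.sum_congr rfl
    intro A _
    by_cases hP : W ⊆ A ∧ Disjoint A U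
    · rw [if_pos hP]
      apply Finset.sum_congr rfl
      intro T _
      by_cases hQ : Q T
      · by_cases hAT : A ⊆ T
        · rw [if_pos ⟨hAT, hQ⟩, if_pos hQ, if_pos ⟨hP.1, hP.2, hAT⟩]
        · rw [if_neg (fun h => hAT h.1), if_pos hQ, if_neg (fun h => hAT h.2.2), zero_mul]
      · rw [if_neg (fun h => hQ h.2), if_neg hQ]
    · rw [if_neg hP]
      symm
      apply Finset.sum_eq_zero
      intro T _
      by_cases hQ : Q T
      · rw [if_pos hQ, if_neg (fun h => hP ⟨h.1, h.2.1⟩), zero_mul]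
      · rw [if_neg hQ]
  rw [step1, Finset.sum_comm]
  apply Finset.sum_congr rfl
  intro T _
  by_cases hQ : Q T
  · simp only [if_pos hQ]
    rw [← Finset.sum_mul, inner_ie W U T hWU]
    by_cases hT : W ⊆ T ∧ T ⊆ W ∪ U
    · rw [if_pos hT, if_pos ⟨hT.1, hT.2, hQ⟩]
    · rw [if_neg hT, if_neg (fun h => hT ⟨h.1, h.2.1⟩), zero_mul]
  · simp only [if_neg hQ, Finset.sum_const_zero]
    rw [if_neg (fun h => hQ h.2.2)]

lemma sum_h (c : V → ℝ) (T : Finset V) :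
    ∑ B ∈ (univ : Finset V).powerset,
      (if T ⊆ B then (∏ v ∈ B, (1 - c v)) * ∏ v ∈ univ \ B, c v else 0)
    = ∏ v ∈ T, (1 - c v) := by
  rw [← Finset.sum_filter]
  have hbij : ∑ B ∈ (univ : Finset V).powerset.filter (fun B => T ⊆ B),
      (∏ v ∈ B, (1 - c v)) * ∏ v ∈ univ \ B, c v
      = ∑ C ∈ ((univ : Finset V) \ T).powerset,
        (∏ v ∈ T, (1 - c v)) * ((∏ v ∈ C, (1 - c v)) * ∏ v ∈ ((univ : Finset V) \ T) \ C, c v) := by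
    apply Finset.sum_nbij' (fun B => B \ T) (fun C => C ∪ T)
    · intro B hB
      simp only [mem_filter, mem_powerset] at hB
      simp only [mem_powerset]
      intro x hx
      simp only [mem_sdiff] at hx ⊢
      exact ⟨mem_univ x, hx.2⟩
    · intro C hC
      simp only [mem_powerset] at hC
      simp only [mem_filter, mem_powerset]
      exact ⟨subset_univ _, subset_union_right⟩
    · intro B hB
      simp only [mem_filter, mem_powerset] at hB
      exact Finset.sdiff_union_of_subset hB.2
    · intro C hC
      simp only [mem_powerset] at hC
      apply Finset.union_sdiff_cancel_right
      exact Finset.disjoint_left.mpr (fun x hx => by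
        have := hC hx; simp only [mem_sdiff] at this; exact this.2)
    · intro B hB
      simp only [mem_filter, mem_powerset] at hB
      have h1 : ∏ v ∈ B, (1 - c v) = (∏ v ∈ T, (1 - c v)) * ∏ v ∈ B \ T, (1 - c v) := by
        rw [mul_comm, Finset.prod_sdiff hB.2]
      have h2 : (univ : Finset V) \ B = ((univ : Finset V) \ T) \ (B \ T) := by
        ext x
        simp only [mem_sdiff, mem_univ, true_and]
        constructor
        · intro hx; exact ⟨fun hT => hx (hB.2 hT), fun h => hx h.1⟩
        · intro hx hxB
          by_cases hT : x ∈ T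
          · exact hx.1 hT
          · exact hx.2 ⟨hxB, hT⟩
      rw [h1, h2]; ring
  rw [hbij, ← Finset.mul_sum]
  have h3 : ∑ C ∈ ((univ : Finset V) \ T).powerset,
      (∏ v ∈ C, (1 - c v)) * ∏ v ∈ ((univ : Finset V) \ T) \ C, c v
      = ∏ v ∈ (univ : Finset V) \ T, ((1 - c v) + c v) :=
    (Finset.prod_add (fun v => 1 - c v) c ((univ : Finset V) \ T)).symm
  rw [h3]
  have h4 : ∏ v ∈ (univ : Finset V) \ T, ((1 - c v) + c v) = 1 := by
    apply Finset.prod_eq_one; intro v _; ring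
  rw [h4, mul_one]

omit [Fintype V] in
lemma inter_eq_iff (A B W : Finset V) :
    A ∩ B = W ↔ W ⊆ B ∧ W ⊆ A ∧ Disjoint A (B \ W) := by
  constructor
  · intro h
    subst h
    refine ⟨inter_subset_right, inter_subset_left, ?_⟩
    rw [Finset.disjoint_left]
    intro x hxA hx
    simp only [mem_sdiff, mem_inter] at hx
    exact hx.2 ⟨hxA, hx.1⟩
  · rintro ⟨hWB, hWA, hD⟩
    ext x
    simp only [mem_inter]
    constructor
    · rintro ⟨hxA, hxB⟩
      by_contra hxW
      exact (Finset.disjoint_left.mp hD hxA) (mem_sdiff.mpr ⟨hxB, hxW⟩)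
    · intro hx; exact ⟨hWA hx, hWB hx⟩

lemma core_sum (pp cc : V → ℝ) (Q : Finset V → Prop) (W : Finset V) :
    ∑ AB ∈ ((univ : Finset V).powerset ×ˢ (univ : Finset V).powerset).filter
        (fun AB => AB.1 ∩ AB.2 = W),
      (∑ T ∈ (univ : Finset V).powerset,
        (if AB.1 ⊆ T ∧ Q T then (-1:ℝ)^(T.card - AB.1.card) * ∏ v ∈ T, (1 - pp v) else 0))
      * ((∏ v ∈ AB.2, (1 - cc v)) * ∏ v ∈ univ \ AB.2, cc v)
    = ∑ T ∈ (univ : Finset V).powerset,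
        (if W ⊆ T ∧ Q T then (-1:ℝ)^(T.card - W.card) * ∏ v ∈ T, ((1 - pp v) * (1 - cc v)) else 0) := by
  rw [Finset.sum_filter, Finset.sum_product]
  rw [Finset.sum_comm]
  have step1 : ∀ B ∈ (univ : Finset V).powerset,
      (∑ A ∈ (univ : Finset V).powerset, (if A ∩ B = W then
        (∑ T ∈ (univ : Finset V).powerset,
          (if A ⊆ T ∧ Q T then (-1:ℝ)^(T.card - A.card) * ∏ v ∈ T, (1 - pp v) else 0))
        * ((∏ v ∈ B, (1 - cc v)) * ∏ v ∈ univ \ B, cc v) else 0))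
      = (∑ T ∈ (univ : Finset V).powerset,
          (if W ⊆ T ∧ T ⊆ B ∧ Q T then (-1:ℝ)^(T.card - W.card) * ∏ v ∈ T, (1 - pp v) else 0))
        * ((∏ v ∈ B, (1 - cc v)) * ∏ v ∈ univ \ B, cc v) := by
    intro B _
    by_cases hWB : W ⊆ B
    · have hL := L1 Q (fun v => 1 - pp v) W (B \ W) (by
        rw [Finset.disjoint_left]; intro x hx hx2
        exact (mem_sdiff.mp hx2).2 hx)
      rw [Finset.union_sdiff_of_subset hWB] at hL
      have hterm : ∀ A ∈ (univ : Finset V).powerset,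
          (if A ∩ B = W then
            (∑ T ∈ (univ : Finset V).powerset,
              (if A ⊆ T ∧ Q T then (-1:ℝ)^(T.card - A.card) * ∏ v ∈ T, (1 - pp v) else 0))
            * ((∏ v ∈ B, (1 - cc v)) * ∏ v ∈ univ \ B, cc v) else 0)
          = (if W ⊆ A ∧ Disjoint A (B \ W) then
              ∑ T ∈ (univ : Finset V).powerset,
                (if A ⊆ T ∧ Q T then (-1:ℝ)^(T.card - A.card) * ∏ v ∈ T, (1 - pp v) else 0) else 0)
            * ((∏ v ∈ B, (1 - cc v)) * ∏ v ∈ univ \ B, cc v) := by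
        intro A _
        by_cases h : A ∩ B = W
        · rw [if_pos h, if_pos ⟨((inter_eq_iff A B W).mp h).2.1, ((inter_eq_iff A B W).mp h).2.2⟩]
        · rw [if_neg h, if_neg (fun hh => h ((inter_eq_iff A B W).mpr ⟨hWB, hh.1, hh.2⟩)), zero_mul]
      rw [Finset.sum_congr rfl hterm, ← Finset.sum_mul, hL]
    · have h1 : ∀ A ∈ (univ : Finset V).powerset, (if A ∩ B = W then
          (∑ T ∈ (univ : Finset V).powerset,
            (if A ⊆ T ∧ Q T then (-1:ℝ)^(T.card - A.card) * ∏ v ∈ T, (1 - pp v) else 0))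
          * ((∏ v ∈ B, (1 - cc v)) * ∏ v ∈ univ \ B, cc v) else 0) = 0 := by
        intro A _
        rw [if_neg (fun h => hWB ((inter_eq_iff A B W).mp h).1)]
      rw [Finset.sum_congr rfl h1, Finset.sum_const_zero]
      have h2 : ∀ T ∈ (univ : Finset V).powerset,
          (if W ⊆ T ∧ T ⊆ B ∧ Q T then (-1:ℝ)^(T.card - W.card) * ∏ v ∈ T, (1 - pp v) else 0) = 0 := by
        intro T _
        rw [if_neg (fun h => hWB (h.1.trans h.2.1))]
      rw [Finset.sum_congr rfl h2, Finset.sum_const_zero, zero_mul]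
  rw [Finset.sum_congr rfl step1]
  have step2 : ∀ B ∈ (univ : Finset V).powerset,
      (∑ T ∈ (univ : Finset V).powerset,
          (if W ⊆ T ∧ T ⊆ B ∧ Q T then (-1:ℝ)^(T.card - W.card) * ∏ v ∈ T, (1 - pp v) else 0))
        * ((∏ v ∈ B, (1 - cc v)) * ∏ v ∈ univ \ B, cc v)
      = ∑ T ∈ (univ : Finset V).powerset,
          (if W ⊆ T ∧ Q T then ((-1:ℝ)^(T.card - W.card) * ∏ v ∈ T, (1 - pp v)) *
            (if T ⊆ B then (∏ v ∈ B, (1 - cc v)) * ∏ v ∈ univ \ B, cc v else 0) else 0) := by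
    intro B _
    rw [Finset.sum_mul]
    apply Finset.sum_congr rfl
    intro T _
    by_cases h1 : W ⊆ T ∧ Q T
    · rw [if_pos h1]
      by_cases h2 : T ⊆ B
      · rw [if_pos ⟨h1.1, h2, h1.2⟩, if_pos h2]
      · rw [if_neg (fun h => h2 h.2.1), if_neg h2, zero_mul, mul_zero]
    · rw [if_neg (fun h => h1 ⟨h.1, h.2.2⟩), if_neg h1, zero_mul]
  rw [Finset.sum_congr rfl step2, Finset.sum_comm]
  apply Finset.sum_congr rfl
  intro T _
  by_cases h1 : W ⊆ T ∧ Q T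
  · simp only [if_pos h1]
    rw [← Finset.mul_sum, sum_h cc T, mul_assoc, ← Finset.prod_mul_distrib]
  · simp only [if_neg h1, Finset.sum_const_zero]

noncomputable def omOf (A : Finset V) : V → Bool := fun v => decide (v ∉ A)

noncomputable def zsF (ω : V → Bool) : Finset V := univ.filter (fun v => ω v = false)

lemma omOf_false_iff (A : Finset V) (v : V) : omOf A v = false ↔ v ∈ A := by
  simp [omOf]

lemma zsF_omOf (A : Finset V) : zsF (omOf A) = A := by
  ext v; simp [zsF, omOf]

lemma omOf_zsF (ω : V → Bool) : omOf (zsF ω) = ω := by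
  funext v; cases h : ω v <;> simp [omOf, zsF, h]

lemma event_singleton (W : Finset V) :
    {ω : V → Bool | ∀ v, (ω v = false ↔ v ∈ W)} = ({omOf W} : Set (V → Bool)) := by
  ext ω
  simp only [Set.mem_setOf_eq, Set.mem_singleton_iff]
  constructor
  · intro h
    funext v
    cases hv : ω v
    · simp [omOf, (h v).mp hv]
    · have : v ∉ W := fun hW => by rw [(h v).mpr hW] at hv; exact Bool.false_ne_true hv
      simp [omOf, this]
  · intro h; subst h; intro v; exact omOf_false_iff W v

lemma zsF_or (y x : V → Bool) : zsF (fun v => y v || x v) = zsF y ∩ zsF x := by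
  ext v; simp [zsF, Bool.or_eq_false_iff]

lemma meas_sum {α : Type*} [Fintype α] [MeasurableSpace α] [MeasurableSingletonClass α]
    (μ : Measure α) (s : Set α) :
    μ s = ∑ a ∈ univ.filter (· ∈ s), μ {a} := by
  have hs : s = ⋃ a ∈ (univ.filter (· ∈ s) : Finset α), ({a} : Set α) := by
    ext x; simp
  rw [show μ s = μ (⋃ a ∈ (univ.filter (· ∈ s) : Finset α), ({a} : Set α)) from by rw [← hs]]
  exact measure_biUnion_finset (fun a _ b _ hab => Set.disjoint_singleton.mpr hab)
    (fun b _ => measurableSet_singleton b)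

lemma meas_sum_real {α : Type*} [Fintype α] [MeasurableSpace α] [MeasurableSingletonClass α]
    (μ : Measure α) [IsFiniteMeasure μ] (s : Set α) :
    (μ s).toReal = ∑ a ∈ univ.filter (· ∈ s), (μ {a}).toReal := by
  rw [meas_sum μ s, ENNReal.toReal_sum (fun a _ => measure_ne_top μ _)]

lemma maxLaw_sing (μ ν : Measure (V → Bool)) [IsProbabilityMeasure μ] [IsProbabilityMeasure ν]
    (ω₀ : V → Bool) :
    ((maxLaw μ ν) {ω₀}).toReal
    = ∑ yx ∈ (univ : Finset ((V → Bool) × (V → Bool))).filter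
        (fun yx => (fun v => yx.1 v || yx.2 v) = ω₀),
      (μ {yx.1}).toReal * (ν {yx.2}).toReal := by
  rw [maxLaw, Measure.map_apply (measurable_of_countable _) (measurableSet_singleton ω₀)]
  rw [meas_sum_real]
  have hfil : (univ : Finset ((V → Bool) × (V → Bool))).filter
      (· ∈ (fun ω : (V → Bool) × (V → Bool) => fun v => ω.1 v || ω.2 v) ⁻¹' {ω₀})
      = (univ : Finset ((V → Bool) × (V → Bool))).filter
        (fun yx => (fun v => yx.1 v || yx.2 v) = ω₀) := by
    ext yx
    simp [Set.mem_preimage]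
  rw [hfil]
  apply Finset.sum_congr rfl
  intro yx _
  obtain ⟨y, x⟩ := yx
  rw [show ({(y, x)} : Set ((V → Bool) × (V → Bool))) = {y} ×ˢ {x} from
    (Set.singleton_prod_singleton).symm, Measure.prod_prod, ENNReal.toReal_mul]

lemma pair_reindex (m₁ m₂ : (V → Bool) → ℝ) (ω₀ : V → Bool) :
    ∑ yx ∈ (univ : Finset ((V → Bool) × (V → Bool))).filter
        (fun yx => (fun v => yx.1 v || yx.2 v) = ω₀),
      m₁ yx.1 * m₂ yx.2
    = ∑ AB ∈ ((univ : Finset V).powerset ×ˢ (univ : Finset V).powerset).filter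
        (fun AB => AB.1 ∩ AB.2 = zsF ω₀),
      m₁ (omOf AB.1) * m₂ (omOf AB.2) := by
  apply Finset.sum_nbij' (fun yx => (zsF yx.1, zsF yx.2)) (fun AB => (omOf AB.1, omOf AB.2))
  · intro yx hyx
    simp only [mem_filter, mem_univ, true_and] at hyx
    simp only [mem_filter, Finset.mem_product, mem_powerset]
    exact ⟨⟨subset_univ _, subset_univ _⟩, by rw [← zsF_or, hyx]⟩
  · intro AB hAB
    simp only [mem_filter, Finset.mem_product, mem_powerset] at hAB
    simp only [mem_filter, mem_univ, true_and]
    have h1 : zsF (fun v => omOf AB.1 v || omOf AB.2 v) = zsF ω₀ := by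
      rw [zsF_or, zsF_omOf, zsF_omOf, hAB.2]
    calc (fun v => omOf AB.1 v || omOf AB.2 v)
        = omOf (zsF (fun v => omOf AB.1 v || omOf AB.2 v)) := (omOf_zsF _).symm
      _ = omOf (zsF ω₀) := by rw [h1]
      _ = ω₀ := omOf_zsF ω₀
  · intro yx _
    exact Prod.ext (omOf_zsF yx.1) (omOf_zsF yx.2)
  · intro AB _
    exact Prod.ext (zsF_omOf AB.1) (zsF_omOf AB.2)
  · intro yx _
    rw [omOf_zsF, omOf_zsF]

lemma nu_sing (c : V → ℝ) (hc : ∀ v, c v ∈ Set.Icc (0:ℝ) 1)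
    (ν : Measure (V → Bool)) (hν : IsProduct c ν) (B : Finset V) :
    (ν {omOf B}).toReal = (∏ v ∈ B, (1 - c v)) * ∏ v ∈ univ \ B, c v := by
  have hcyl : cylEvt univ (omOf B) = ({omOf B} : Set (V → Bool)) := by
    ext ω
    simp only [cylEvt, Set.mem_setOf_eq, Set.mem_singleton_iff]
    constructor
    · intro h; funext v; exact h v (mem_univ v)
    · intro h v _; rw [h]
  rw [← hcyl, hν.2 univ (omOf B), ENNReal.toReal_prod]
  have hterm : ∀ v ∈ (univ : Finset V),
      (ENNReal.ofReal (if omOf B v then c v else 1 - c v)).toReal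
      = if v ∈ B then 1 - c v else c v := by
    intro v _
    by_cases h : v ∈ B
    · have hb : omOf B v = false := (omOf_false_iff B v).mpr h
      rw [hb]
      simp only [Bool.false_eq_true, if_false, if_pos h]
      exact ENNReal.toReal_ofReal (by linarith [(hc v).2])
    · have hb : omOf B v = true := by
        cases hh : omOf B v
        · exact absurd ((omOf_false_iff B v).mp hh) h
        · rfl
      rw [hb]
      simp only [if_true, if_neg h]
      exact ENNReal.toReal_ofReal (hc v).1
  rw [Finset.prod_congr rfl hterm, ← Finset.prod_sdiff (subset_univ B)]
  have hB : ∏ v ∈ B, (if v ∈ B then 1 - c v else c v) = ∏ v ∈ B, (1 - c v) :=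
    Finset.prod_congr rfl (fun v hv => if_pos hv)
  have hBc : ∏ v ∈ (univ : Finset V) \ B, (if v ∈ B then 1 - c v else c v)
      = ∏ v ∈ (univ : Finset V) \ B, c v :=
    Finset.prod_congr rfl (fun v hv => if_neg (mem_sdiff.mp hv).2)
  rw [hB, hBc, mul_comm]

lemma mu_sing {G : SimpleGraph V} {p : V → ℝ} {μ : Measure (V → Bool)}
    (hμ : IsShearer G p μ) (A : Finset V) :
    (μ {omOf A}).toReal = ∑ T ∈ (univ : Finset V).powerset,
      (if A ⊆ T ∧ ∀ u ∈ T, ∀ w ∈ T, ¬ G.Adj u w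
        then (-1:ℝ)^(T.card - A.card) * ∏ v ∈ T, (1 - p v) else 0) := by
  have := hμ.2 A
  rwa [event_singleton A] at this

lemma ite_irrel {P : Prop} {i1 i2 : Decidable P} (a b : ℝ) :
    @ite ℝ P i1 a b = @ite ℝ P i2 a b := by
  cases Subsingleton.elim i1 i2; rfl

lemma maxLaw_formula (G : SimpleGraph V) (p c : V → ℝ)
    (hc : ∀ v, c v ∈ Set.Icc (0:ℝ) 1)
    (μ ν : Measure (V → Bool)) (hμ : IsShearer G p μ) (hν : IsProduct c ν)
    (W : Finset V) :
    ((maxLaw μ ν) {omOf W}).toReal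
    = ∑ T ∈ (univ : Finset V).powerset,
        (if W ⊆ T ∧ ∀ u ∈ T, ∀ w ∈ T, ¬ G.Adj u w
          then (-1:ℝ)^(T.card - W.card) * ∏ v ∈ T, ((1 - p v) * (1 - c v)) else 0) := by
  have h1 : IsProbabilityMeasure μ := hμ.1
  have h2 : IsProbabilityMeasure ν := hν.1
  rw [maxLaw_sing μ ν (omOf W),
    pair_reindex (fun y => (μ {y}).toReal) (fun x => (ν {x}).toReal) (omOf W), zsF_omOf]
  have hcs := core_sum p c (fun T => ∀ u ∈ T, ∀ w ∈ T, ¬ G.Adj u w) W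
  refine Eq.trans ?_ (hcs.trans ?_)
  · apply Finset.sum_congr rfl
    intro AB _
    rw [mu_sing hμ AB.1, nu_sing c hc ν hν AB.2]
    congr 1
    apply Finset.sum_congr rfl
    intro T _
    exact ite_irrel _ _
  · apply Finset.sum_congr rfl
    intro T _
    exact ite_irrel _ _

end Helpers


/-- thinning zeros of Shearer's measure by an independent product
field yields Shearer's measure with parameter r = p + c - c·p; in particular
μ_{G,p} is stochastically dominated by μ_{G,r}. -/
theorem stmt18 {V : Type*} [Fintype V] (G : SimpleGraph V) (p c : V → ℝ)
    (hp : ∀ v, p v ∈ Set.Icc (0:ℝ) 1) (hc : ∀ v, c v ∈ Set.Icc (0:ℝ) 1)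
    (hShearer : ∀ W : Finset V, 0 ≤ Xi G W p)
    (μ ν : Measure (V → Bool)) (hμ : IsShearer G p μ) (hν : IsProduct c ν) :
    (∀ W : Finset V, 0 ≤ Xi G W (fun v => p v + c v - c v * p v)) ∧
    IsShearer G (fun v => p v + c v - c v * p v) (maxLaw μ ν) ∧
    ∀ f : (V → Bool) → ℝ, Monotone f →
      ∫ ω, f ω ∂μ ≤ ∫ ω, f ω ∂(maxLaw μ ν) := by
  
  have hμP : IsProbabilityMeasure μ := hμ.1
  have hνP : IsProbabilityMeasure ν := hν.1
  -- Part 2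
  have part2 : IsShearer G (fun v => p v + c v - c v * p v) (maxLaw μ ν) := by
    constructor
    · exact Measure.isProbabilityMeasure_map ((measurable_of_countable _).aemeasurable)
    · intro W
      rw [event_singleton W, maxLaw_formula G p c hc μ ν hμ hν W]
      apply Finset.sum_congr rfl
      intro T _
      by_cases h : W ⊆ T ∧ ∀ u ∈ T, ∀ w ∈ T, ¬ G.Adj u w
      · rw [if_pos h, if_pos h]
        congr 1
        exact Finset.prod_congr rfl (fun v _ => by ring)
      · rw [if_neg h, if_neg h]
  -- Part 1
  have part1 : ∀ W : Finset V, 0 ≤ Xi G W (fun v => p v + c v - c v * p v) := by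
    intro W
    have hL := L1 (fun T => ∀ u ∈ T, ∀ w ∈ T, ¬ G.Adj u w)
      (fun v => (1 - p v) * (1 - c v)) ∅ W (Finset.disjoint_left.mpr (by simp))
    have key : ∑ A ∈ (univ : Finset V).powerset.filter (fun A => Disjoint A W),
        ((maxLaw μ ν) {omOf A}).toReal = Xi G W (fun v => p v + c v - c v * p v) := by
      refine Eq.trans (Eq.trans ?_ hL) ?_
      · rw [Finset.sum_filter]
        apply Finset.sum_congr rfl
        intro A _
        by_cases h : Disjoint A W
        · rw [if_pos h, if_pos ⟨Finset.empty_subset A, h⟩,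
            maxLaw_formula G p c hc μ ν hμ hν A]
          exact Finset.sum_congr rfl (fun T _ => ite_irrel _ _)
        · rw [if_neg h, if_neg (fun hh => h hh.2)]
      · simp only [Xi]
        have hps : W.powerset = (univ : Finset V).powerset.filter (· ⊆ W) := by
          ext T; simp
        rw [hps, Finset.sum_filter]
        apply Finset.sum_congr rfl
        intro T _
        by_cases hTW : T ⊆ W
        · by_cases hQT : ∀ u ∈ T, ∀ w ∈ T, ¬ G.Adj u w
          · rw [if_pos ⟨Finset.empty_subset T,
                by rw [Finset.empty_union]; exact hTW, hQT⟩,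
              if_pos hTW, if_pos hQT]
            have hprod : ∏ v ∈ T, -(1 - (p v + c v - c v * p v))
                = (-1:ℝ)^T.card * ∏ v ∈ T, ((1 - p v) * (1 - c v)) := by
              rw [show (∏ v ∈ T, -(1 - (p v + c v - c v * p v)))
                  = ∏ v ∈ T, ((-1:ℝ) * ((1 - p v) * (1 - c v))) from
                Finset.prod_congr rfl (fun v _ => by ring)]
              rw [Finset.prod_mul_distrib, Finset.prod_const]
            rw [hprod, Finset.card_empty, Nat.sub_zero]
          · rw [if_neg (fun h => hQT h.2.2), if_pos hTW, if_neg hQT]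
        · rw [if_neg (fun h => hTW (by rw [← Finset.empty_union W]; exact h.2.1)),
            if_neg hTW]
    rw [← key]
    exact Finset.sum_nonneg (fun A _ => ENNReal.toReal_nonneg)
  -- Part 3
  have part3 : ∀ f : (V → Bool) → ℝ, Monotone f →
      ∫ ω, f ω ∂μ ≤ ∫ ω, f ω ∂(maxLaw μ ν) := by
    intro f hf
    have hPmax : IsProbabilityMeasure (maxLaw μ ν) := part2.1
    rw [integral_fintype (Integrable.of_finite), integral_fintype (Integrable.of_finite)]
    simp only [smul_eq_mul, measureReal_def]
    have hν_total : ∑ x : V → Bool, (ν {x}).toReal = 1 := by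
      have h := meas_sum_real ν Set.univ
      rw [measure_univ, ENNReal.toReal_one] at h
      refine Eq.trans ?_ h.symm
      exact Finset.sum_congr (by ext x; simp) (fun x _ => rfl)
    have hR : ∑ ω : V → Bool, ((maxLaw μ ν) {ω}).toReal * f ω
        = ∑ yx : (V → Bool) × (V → Bool),
            (μ {yx.1}).toReal * (ν {yx.2}).toReal * f (fun v => yx.1 v || yx.2 v) := by
      have h1 : ∀ ω : V → Bool, ((maxLaw μ ν) {ω}).toReal * f ω
          = ∑ yx ∈ (univ : Finset ((V → Bool) × (V → Bool))).filter
              (fun yx => (fun v => yx.1 v || yx.2 v) = ω),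
            (μ {yx.1}).toReal * (ν {yx.2}).toReal * f (fun v => yx.1 v || yx.2 v) := by
        intro ω
        rw [maxLaw_sing μ ν ω, Finset.sum_mul]
        apply Finset.sum_congr rfl
        intro yx hyx
        rw [(Finset.mem_filter.mp hyx).2]
      rw [Finset.sum_congr rfl (fun ω _ => h1 ω)]
      exact Finset.sum_fiberwise_of_maps_to (fun yx _ => mem_univ _) _
    have hL2 : ∑ ω : V → Bool, (μ {ω}).toReal * f ω
        = ∑ yx : (V → Bool) × (V → Bool),
            (μ {yx.1}).toReal * (ν {yx.2}).toReal * f yx.1 := by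
      rw [Fintype.sum_prod_type]
      apply Finset.sum_congr rfl
      intro y _
      have h2 : ∑ x : V → Bool, (μ {y}).toReal * (ν {x}).toReal * f y
          = (μ {y}).toReal * f y * ∑ x : V → Bool, (ν {x}).toReal := by
        rw [Finset.mul_sum]
        apply Finset.sum_congr rfl
        intro x _
        ring
      rw [h2, hν_total, mul_one]
    rw [hR, hL2]
    apply Finset.sum_le_sum
    intro yx _
    have hle : yx.1 ≤ fun v => yx.1 v || yx.2 v := by
      intro v
      cases h : yx.1 v
      · exact Bool.false_le _
      · simp [h]
    exact mul_le_mul_of_nonneg_left (hf hle)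
      (mul_nonneg ENNReal.toReal_nonneg ENNReal.toReal_nonneg)
  exact ⟨part1, part2, part3⟩
end

section
/- For every ε > 0 there exists K ∈ ℕ such that for every integer k ≥ K and every σ ∈ [0,1]: if (1 − σ)^{k+1} ≥ k^k / (k+1)^{k+1}, then σ ≤ (1 + (1+ε)·ln(k+1)) / (k+1). In particular, for every ε > 0 and all sufficiently large k, 1 − k^{k/(k+1)}/(k+1) ≤ 1/(k+1) + (1 − (k+1)^{−1/(k+1)}) ≤ (1 + (1+ε)·ln(k+1)) / (k+1). -/
/-- Subadditivity of `x ^ p` for `0 ≤ p ≤ 1` on nonnegative reals. -/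
lemma aux_add_rpow_le (x y p : ℝ) (hx : 0 ≤ x) (hy : 0 ≤ y) (hp0 : 0 ≤ p) (hp1 : p ≤ 1) :
    (x + y) ^ p ≤ x ^ p + y ^ p := by
  have h := NNReal.rpow_add_le_add_rpow x.toNNReal y.toNNReal hp0 hp1
  have := NNReal.coe_le_coe.2 h
  simpa [NNReal.coe_rpow, Real.coe_toNNReal _ hx, Real.coe_toNNReal _ hy,
    Real.coe_toNNReal _ (add_nonneg hx hy)] using this

/-- First inequality of the chain, for real `x ≥ 1`. -/
lemma aux_ineq1 (x : ℝ) (hx : 1 ≤ x) :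
    1 - x ^ (x / (x + 1)) / (x + 1) ≤ 1 / (x + 1) + (1 - (x + 1) ^ (-(1 : ℝ) / (x + 1))) := by
  have hx0 : (0:ℝ) ≤ x := le_trans zero_le_one hx
  have hx1 : (0:ℝ) < x + 1 := by linarith
  have ha0 : (0:ℝ) ≤ x / (x + 1) := by positivity
  have ha1 : x / (x + 1) ≤ 1 := by
    rw [div_le_one hx1]; linarith
  have key : (x + 1) ^ (x / (x + 1)) ≤ 1 + x ^ (x / (x + 1)) := by
    have := aux_add_rpow_le 1 x (x / (x + 1)) zero_le_one hx0 ha0 ha1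
    simpa [add_comm] using this
  have hexp : -(1 : ℝ) / (x + 1) = x / (x + 1) - 1 := by
    field_simp
    ring
  have hrw : (x + 1) ^ (-(1 : ℝ) / (x + 1)) = (x + 1) ^ (x / (x + 1)) / (x + 1) := by
    rw [hexp, Real.rpow_sub hx1, Real.rpow_one]
  rw [hrw]
  have hdiv : (x + 1) ^ (x / (x + 1)) / (x + 1) ≤ (1 + x ^ (x / (x + 1))) / (x + 1) := by
    gcongr
  rw [add_div] at hdiv
  linarith

/-- Second inequality of the chain, for real `x ≥ 0` and `ε ≥ 0`. -/
lemma aux_ineq2 (x ε : ℝ) (hx : 0 ≤ x) (hε : 0 ≤ ε) :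
    1 / (x + 1) + (1 - (x + 1) ^ (-(1 : ℝ) / (x + 1))) ≤
      (1 + (1 + ε) * Real.log (x + 1)) / (x + 1) := by
  have hx1 : (0:ℝ) < x + 1 := by linarith
  have hlog : 0 ≤ Real.log (x + 1) := Real.log_nonneg (by linarith)
  have hrw : (x + 1) ^ (-(1 : ℝ) / (x + 1)) = Real.exp (-(Real.log (x + 1) / (x + 1))) := by
    rw [Real.rpow_def_of_pos hx1]
    ring_nf
  have hexp : 1 - Real.exp (-(Real.log (x + 1) / (x + 1))) ≤ Real.log (x + 1) / (x + 1) := by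
    have h := Real.add_one_le_exp (-(Real.log (x + 1) / (x + 1)))
    linarith
  rw [hrw]
  have : 1 / (x + 1) + Real.log (x + 1) / (x + 1) ≤
      (1 + (1 + ε) * Real.log (x + 1)) / (x + 1) := by
    rw [← add_div, div_le_div_iff₀ hx1 hx1]
    have : Real.log (x + 1) ≤ (1 + ε) * Real.log (x + 1) := by nlinarith
    nlinarith
  linarith

/-- the analytic core of the asymptotic bound on the k-fuzz of ℤ. -/
theorem stmt19 (ε : ℝ) (hε : 0 < ε) :
    ∃ K : ℕ, ∀ k : ℕ, K ≤ k →
      (∀ σ : ℝ, σ ∈ Set.Icc (0:ℝ) 1 →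
        (k : ℝ) ^ k / ((k : ℝ) + 1) ^ (k + 1) ≤ (1 - σ) ^ (k + 1) →
        σ ≤ (1 + (1 + ε) * Real.log ((k : ℝ) + 1)) / ((k : ℝ) + 1)) ∧
      (1 - (k : ℝ) ^ ((k : ℝ) / ((k : ℝ) + 1)) / ((k : ℝ) + 1) ≤
          1 / ((k : ℝ) + 1) + (1 - ((k : ℝ) + 1) ^ (-(1 : ℝ) / ((k : ℝ) + 1))) ∧
        1 / ((k : ℝ) + 1) + (1 - ((k : ℝ) + 1) ^ (-(1 : ℝ) / ((k : ℝ) + 1))) ≤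
          (1 + (1 + ε) * Real.log ((k : ℝ) + 1)) / ((k : ℝ) + 1)) := by
  refine ⟨1, fun k hk => ?_⟩
  have hx : (1:ℝ) ≤ (k:ℝ) := by exact_mod_cast hk
  have hx0 : (0:ℝ) < (k:ℝ) := by linarith
  have hx1 : (0:ℝ) < (k:ℝ) + 1 := by linarith
  have h1 := aux_ineq1 (k:ℝ) hx
  have h2 := aux_ineq2 (k:ℝ) ε (by linarith) hε.le
  refine ⟨?_, h1, h2⟩
  rintro σ ⟨hσ0, hσ1⟩ h
  have hs : (0:ℝ) ≤ 1 - σ := by linarith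
  have root : (k:ℝ) ^ ((k:ℝ) / ((k:ℝ) + 1)) / ((k:ℝ) + 1) ≤ 1 - σ := by
    have h0 : (0:ℝ) ≤ (k:ℝ) ^ k / ((k:ℝ) + 1) ^ (k + 1) := by positivity
    have hp : (0:ℝ) ≤ 1 / ((k:ℝ) + 1) := by positivity
    have hr := Real.rpow_le_rpow h0 h hp
    have hne : ((k:ℝ) + 1) ≠ 0 := hx1.ne'
    rw [← Real.rpow_natCast (1 - σ) (k + 1), ← Real.rpow_mul hs] at hr
    rw [Real.div_rpow (by positivity) (by positivity)] at hr
    rw [← Real.rpow_natCast (k:ℝ) k, ← Real.rpow_mul hx0.le] at hr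
    rw [← Real.rpow_natCast ((k:ℝ) + 1) (k + 1), ← Real.rpow_mul hx1.le] at hr
    have hc : ((k + 1 : ℕ) : ℝ) = (k:ℝ) + 1 := by push_cast; ring
    rw [hc] at hr
    simp only [mul_one_div, div_self hne, Real.rpow_one] at hr
    exact hr
  have : σ ≤ 1 - (k:ℝ) ^ ((k:ℝ) / ((k:ℝ) + 1)) / ((k:ℝ) + 1) := by linarith
  linarith
end
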